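/- Let κ be an infinite cardinal with κ^{<κ} = κ, and let X be a Hausdorff topological space whose topology has a basis of size ≤ κ. Then the class of analytic subsets of X (continuous images of closed subsets of ^κκ with the bounded topology) is closed under unions of κ-many sets. -/

import Mathlib

open Cardinal Set

/-- The bounded topology on the generalized Baire space `^κκ`, generated by the sets
`N_s = {x : s ⊆ x}` for `s ∈ ^{<κ}κ` (initial segments). -/
def baireTopology (κ : Cardinal) : TopologicalSpace (κ.ord.ToType → κ.ord.ToType) :=
  TopologicalSpace.generateFrom
    {U | ∃ (x : κ.ord.ToType → κ.ord.ToType) (j : κ.ord.ToType), U = {y | ∀ i < j, y i = x i}}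

/-- A subset `A` of a topological space `X` is `κ`-analytic if it is the image of a
closed subset of `^κκ` (with the bounded topology) under a continuous map into `X`. -/
def kAnalytic (κ : Cardinal) {X : Type} (tX : TopologicalSpace X) (A : Set X) : Prop :=
  ∃ (C : Set (κ.ord.ToType → κ.ord.ToType)) (f : (κ.ord.ToType → κ.ord.ToType) → X),
    @IsClosed _ (baireTopology κ) C ∧ @ContinuousOn _ _ (baireTopology κ) tX f C ∧ f '' C = A

section Aux

variable {κ : Cardinal}

lemma one_add_lt_ord (hinf : ℵ₀ ≤ κ) {α : Ordinal} (hα : α < κ.ord) : 1 + α < κ.ord := by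
  rw [Cardinal.lt_ord] at hα ⊢
  rw [Ordinal.card_add, Ordinal.card_one]
  exact Cardinal.add_lt_of_lt hinf (lt_of_lt_of_le Cardinal.one_lt_aleph0 hinf) hα

noncomputable def bShift (κ : Cardinal) (hinf : ℵ₀ ≤ κ) : κ.ord.ToType → κ.ord.ToType :=
  fun t => (Ordinal.ToType.mk (o := κ.ord))
    ⟨1 + (((Ordinal.ToType.mk (o := κ.ord))).symm t).1,
      Set.mem_Iio.2 (one_add_lt_ord hinf (((Ordinal.ToType.mk (o := κ.ord))).symm t).2)⟩

noncomputable def bZero (κ : Cardinal) (hinf : ℵ₀ ≤ κ) : κ.ord.ToType :=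
  (Ordinal.ToType.mk (o := κ.ord)) ⟨0, Set.mem_Iio.2 (by
    rw [Cardinal.lt_ord, Ordinal.card_zero]
    exact lt_of_lt_of_le Cardinal.aleph0_pos hinf)⟩

lemma bShift_strictMono (hinf : ℵ₀ ≤ κ) : StrictMono (bShift κ hinf) := by
  intro a b hab
  unfold bShift
  rw [OrderIso.lt_iff_lt, Subtype.mk_lt_mk]
  exact add_lt_add_right (Subtype.coe_lt_coe.2 ((Ordinal.ToType.mk (o := κ.ord)).symm.lt_iff_lt.2 hab)) 1

lemma bZero_lt_bShift (hinf : ℵ₀ ≤ κ) (t : κ.ord.ToType) : bZero κ hinf < bShift κ hinf t := by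
  unfold bZero bShift
  rw [OrderIso.lt_iff_lt, Subtype.mk_lt_mk]
  exact lt_of_lt_of_le zero_lt_one (le_self_add (a := 1))

lemma bShift_injective (hinf : ℵ₀ ≤ κ) : Function.Injective (bShift κ hinf) :=
  (bShift_strictMono hinf).injective

lemma baire_open_iff (κ : Cardinal) (hinf : ℵ₀ ≤ κ) (U : Set (κ.ord.ToType → κ.ord.ToType)) :
    @IsOpen _ (baireTopology κ) U ↔
      ∀ x ∈ U, ∃ j, {y | ∀ i < j, y i = x i} ⊆ U := by
  letI := baireTopology κ
  constructor
  · intro h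
    have h' : TopologicalSpace.GenerateOpen
        {U | ∃ (x : κ.ord.ToType → κ.ord.ToType) (j : κ.ord.ToType),
          U = {y | ∀ i < j, y i = x i}} U := h
    clear h
    induction h' with
    | basic V hV =>
      obtain ⟨x0, j, rfl⟩ := hV
      intro x hx
      exact ⟨j, fun y hy i hi => (hy i hi).trans (hx i hi)⟩
    | univ => exact fun x _ => ⟨bZero κ hinf, fun y _ => trivial⟩
    | inter V W _ _ ihV ihW =>
      intro x hx
      obtain ⟨j1, hj1⟩ := ihV x hx.1
      obtain ⟨j2, hj2⟩ := ihW x hx.2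
      exact ⟨max j1 j2,
        fun y hy => ⟨hj1 (fun i hi => hy i (lt_of_lt_of_le hi (le_max_left _ _))),
          hj2 (fun i hi => hy i (lt_of_lt_of_le hi (le_max_right _ _)))⟩⟩
    | sUnion S _ ih =>
      intro x hx
      obtain ⟨V, hVS, hxV⟩ := hx
      obtain ⟨j, hj⟩ := ih V hVS x hxV
      exact ⟨j, fun y hy => ⟨V, hVS, hj hy⟩⟩
  · intro h
    choose j hj using h
    have hU : U = ⋃ x : U, {y | ∀ i < j x.1 x.2, y i = x.1 i} := by
      ext y
      constructor
      · intro hy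
        exact mem_iUnion.2 ⟨⟨y, hy⟩, fun i _ => rfl⟩
      · intro hy
        obtain ⟨x, hx⟩ := mem_iUnion.1 hy
        exact hj x.1 x.2 hx
    rw [hU]
    exact isOpen_iUnion fun x =>
      TopologicalSpace.GenerateOpen.basic _ ⟨x.1, j x.1 x.2, rfl⟩


end Aux

/-- For `κ` infinite with `κ^{<κ} = κ` and `X` a Hausdorff space with a basis of size
`≤ κ`, the analytic subsets of `X` are closed under unions of `κ`-many sets. -/
theorem stmt_4 (κ : Cardinal) (hinf : ℵ₀ ≤ κ) (hκ : κ ^< κ = κ)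
    (X : Type) [tX : TopologicalSpace X] [T2Space X]
    (hbasis : ∃ B : Set (Set X), Cardinal.mk ↥B ≤ κ ∧ TopologicalSpace.IsTopologicalBasis B)
    (A : κ.ord.ToType → Set X) (hA : ∀ i, kAnalytic κ tX (A i)) :
    kAnalytic κ tX (⋃ i, A i) := by
  classical
  letI := baireTopology κ
  choose C f hC hcont him using hA
  set s := bShift κ hinf with hs
  set b := bZero κ hinf with hb
  set D : Set (κ.ord.ToType → κ.ord.ToType) := {x | (fun t => x (s t)) ∈ C (x b)} with hD
  set F : (κ.ord.ToType → κ.ord.ToType) → X := fun x => f (x b) (fun t => x (s t)) with hF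
  -- key neighborhood lemma
  have key : ∀ (x : κ.ord.ToType → κ.ord.ToType) (j' : κ.ord.ToType)
      (y : κ.ord.ToType → κ.ord.ToType),
      (∀ i < max (s j') (s b), y i = x i) →
      y b = x b ∧ ∀ i < j', y (s i) = x (s i) := by
    intro x j' y hy
    constructor
    · exact hy b (lt_of_lt_of_le (bZero_lt_bShift hinf b) (le_max_right _ _))
    · intro i hi
      exact hy (s i) (lt_of_lt_of_le (bShift_strictMono hinf hi) (le_max_left _ _))
  refine ⟨D, F, ?_, ?_, ?_⟩
  · -- closed
    rw [← isOpen_compl_iff, baire_open_iff κ hinf]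
    intro x hx
    have hx' : (fun t => x (s t)) ∉ C (x b) := hx
    obtain ⟨j', hj'⟩ := (baire_open_iff κ hinf _).1 (hC (x b)).isOpen_compl _ hx'
    refine ⟨max (s j') (s b), fun y hy => ?_⟩
    obtain ⟨hyb, hys⟩ := key x j' y hy
    intro hyD
    have : (fun t => y (s t)) ∈ C (x b) := by rw [← hyb]; exact hyD
    exact hj' (fun i hi => hys i hi) this
  · -- continuous
    rw [continuousOn_iff]
    intro x hx V hV hFx
    have hx' : (fun t => x (s t)) ∈ C (x b) := hx
    obtain ⟨u, hu, hxu, huV⟩ := continuousOn_iff.1 (hcont (x b)) _ hx' V hV hFx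
    obtain ⟨j', hj'⟩ := (baire_open_iff κ hinf u).1 hu _ hxu
    refine ⟨{y | ∀ i < max (s j') (s b), y i = x i},
      TopologicalSpace.GenerateOpen.basic _ ⟨x, _, rfl⟩, fun i _ => rfl, ?_⟩
    rintro y ⟨hy, hyD⟩
    obtain ⟨hyb, hys⟩ := key x j' y hy
    have h1 : (fun t => y (s t)) ∈ u := hj' (fun i hi => hys i hi)
    have h2 : (fun t => y (s t)) ∈ C (x b) := by rw [← hyb]; exact hyD
    have := huV ⟨h1, h2⟩
    show F y ∈ V
    rw [hF]
    simpa [hyb] using this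
  · -- image
    ext a
    simp only [mem_image, mem_iUnion]
    constructor
    · rintro ⟨x, hxD, rfl⟩
      exact ⟨x b, by rw [← him (x b)]; exact ⟨_, hxD, rfl⟩⟩
    · rintro ⟨i, hai⟩
      rw [← him i] at hai
      obtain ⟨y, hyC, hya⟩ := hai
      set x : κ.ord.ToType → κ.ord.ToType :=
        fun t => if h : ∃ u, s u = t then y h.choose else i with hxdef
      have hxb : x b = i := by
        rw [hxdef]
        have : ¬ ∃ u, s u = b := by
          rintro ⟨u, hu⟩
          exact (bZero_lt_bShift hinf u).ne' hu
        simp [this]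
      have hxs : (fun t => x (s t)) = y := by
        funext u
        rw [hxdef]
        have h : ∃ v, s v = s u := ⟨u, rfl⟩
        simp only [h, dif_pos]
        congr 1
        exact bShift_injective hinf h.choose_spec
      refine ⟨x, ?_, ?_⟩
      · show (fun t => x (s t)) ∈ C (x b)
        rw [hxs, hxb]; exact hyC
      · show f (x b) (fun t => x (s t)) = a
        rw [hxs, hxb, hya]
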